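/- arXiv:math/0009217 — 2 statements merged into one kernel-verified Lean document; each statement's English description precedes it below -/
import Mathlib

section
/- The four complex numbers exp(2πiλ1), exp(2πiλ2), exp(−2πiλ1), exp(−2πiλ2) are not all equal to 1; equivalently, λ1 and λ2 are not both integers. -/
lemma lam1_not_int (m1 m2 m3 : ℝ) (hm1 : 0 < m1) (hm2 : 0 < m2) (hm3 : 0 < m3) :
    ¬ ∃ n : ℤ, (3 / 2 + (1 / 2) * Real.sqrt (13 + Real.sqrt
      (144 * (1 - 3 * (m1 * m2 + m2 * m3 + m1 * m3) / (m1 + m2 + m3) ^ 2))) : ℝ) = (n : ℝ) := by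
  rintro ⟨n, hn⟩
  set S1 : ℝ := m1 + m2 + m3 with hS1
  set S2 : ℝ := m1 * m2 + m2 * m3 + m1 * m3 with hS2
  set θ : ℝ := 144 * (1 - 3 * S2 / S1 ^ 2) with hθ
  have hS1pos : 0 < S1 := by positivity
  have hS2pos : 0 < S2 := by positivity
  have hθ0 : 0 ≤ θ := by
    have h1 : 3 * S2 ≤ S1 ^ 2 := by
      nlinarith [sq_nonneg (m1 - m2), sq_nonneg (m2 - m3), sq_nonneg (m1 - m3)]
    have h2 : 3 * S2 / S1 ^ 2 ≤ 1 := by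
      rw [div_le_one (by positivity)]; exact h1
    nlinarith
  have hθlt : θ < 144 := by
    have h2 : 0 < 3 * S2 / S1 ^ 2 := by positivity
    nlinarith
  set s : ℝ := Real.sqrt θ with hs
  have hs0 : 0 ≤ s := Real.sqrt_nonneg θ
  have hssq : s ^ 2 = θ := Real.sq_sqrt hθ0
  have hslt : s < 12 := by nlinarith
  set a : ℝ := Real.sqrt (13 + s) with ha
  have hasq : a ^ 2 = 13 + s := Real.sq_sqrt (by linarith)
  have hk : a = 2 * (n : ℝ) - 3 := by linarith
  set k : ℤ := 2 * n - 3 with hkdef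
  have hksq : (k : ℝ) ^ 2 = 13 + s := by
    push_cast [hkdef]
    rw [← hk]; exact hasq
  have h13 : (13 : ℝ) ≤ (k : ℝ) ^ 2 := by linarith
  have h25 : ((k : ℝ) ^ 2 : ℝ) < 25 := by linarith
  have h13' : (13 : ℤ) ≤ k ^ 2 := by exact_mod_cast h13
  have h25' : k ^ 2 < 25 := by exact_mod_cast h25
  have hlb : -4 ≤ k := by nlinarith
  have hub : k ≤ 4 := by nlinarith
  interval_cases k <;> omega

open Complex in
theorem monodromy_spectrum_not_trivial
    (m1 m2 m3 : ℝ) (hm1 : 0 < m1) (hm2 : 0 < m2) (hm3 : 0 < m3) :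
    let S1 : ℝ := m1 + m2 + m3
    let S2 : ℝ := m1 * m2 + m2 * m3 + m1 * m3
    let θ : ℝ := 144 * (1 - 3 * S2 / S1 ^ 2)
    let lam1 : ℝ := 3 / 2 + (1 / 2) * Real.sqrt (13 + Real.sqrt θ)
    let lam2 : ℝ := 3 / 2 + (1 / 2) * Real.sqrt (13 - Real.sqrt θ)
    (¬ (Complex.exp (2 * Real.pi * I * lam1) = 1 ∧
        Complex.exp (2 * Real.pi * I * lam2) = 1 ∧
        Complex.exp (-(2 * Real.pi * I * lam1)) = 1 ∧
        Complex.exp (-(2 * Real.pi * I * lam2)) = 1)) ∧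
    ¬ ((∃ n : ℤ, lam1 = (n : ℝ)) ∧ (∃ n : ℤ, lam2 = (n : ℝ))) := by
  intro S1 S2 θ lam1 lam2
  have key := lam1_not_int m1 m2 m3 hm1 hm2 hm3
  constructor
  · rintro ⟨h1, -, -, -⟩
    rw [Complex.exp_eq_one_iff] at h1
    obtain ⟨n, hn⟩ := h1
    apply key
    refine ⟨n, ?_⟩
    have hne : (2 * (Real.pi : ℂ) * I) ≠ 0 := by
      simp [Real.pi_ne_zero, Complex.I_ne_zero]
    have : (lam1 : ℂ) = (n : ℂ) := by
      apply mul_left_cancel₀ hne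
      rw [show (2 * (Real.pi : ℂ) * I) * lam1 = 2 * Real.pi * I * lam1 by ring]
      rw [hn]; ring
    exact_mod_cast this
  · rintro ⟨⟨n, hn⟩, -⟩
    exact key ⟨n, hn⟩
end

section
/- Let M be a 4×4 complex matrix with M² = 0 and T = I + M. If the pair (p, q), with q ≠ 0, is invariant under T, then for every t ∈ ℂ and every x ∈ ℂ⁴ one has p(x + t·Mx)·q(x) = p(x)·q(x + t·Mx); that is, the rational function J = p/q is invariant under the whole one-parameter group {I + t·M : t ∈ ℂ}. -/
open MvPolynomial

/-- `(p, q)` is invariant under `T` : `p(Tx)·q(x) = p(x)·q(Tx)` for all `x ∈ ℂ⁴`,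
i.e. the rational function `J = p/q` satisfies `J ∘ T = J`. -/
def PairInvariant (p q : MvPolynomial (Fin 4) ℂ)
    (T : Matrix (Fin 4) (Fin 4) ℂ) : Prop :=
  ∀ x : Fin 4 → ℂ, eval (T.mulVec x) p * eval x q = eval x p * eval (T.mulVec x) q

private lemma comp_X_add_C_ne_zero {P : Polynomial ℂ} (hP : P ≠ 0) (c : ℂ) :
    P.comp (Polynomial.X + Polynomial.C c) ≠ 0 := by
  intro h
  apply hP
  have := congrArg (fun r => r.comp (Polynomial.X - Polynomial.C c)) h
  simpa [Polynomial.comp_assoc, Polynomial.add_comp, Polynomial.sub_comp] using this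

theorem invariant_pair_one_parameter_group
    (M : Matrix (Fin 4) (Fin 4) ℂ) (hM : M ^ 2 = 0)
    (p q : MvPolynomial (Fin 4) ℂ) (hq : q ≠ 0)
    (hinv : PairInvariant p q (1 + M)) :
    ∀ t : ℂ, ∀ x : Fin 4 → ℂ,
      eval (x + t • M.mulVec x) p * eval x q
        = eval x p * eval (x + t • M.mulVec x) q := by
  intro t x
  set v := M.mulVec x with hv
  have hMv : M.mulVec v = 0 := by
    rw [hv, Matrix.mulVec_mulVec, ← pow_two, hM, Matrix.zero_mulVec]
  -- the one-variable polynomials s ↦ p(x + s v), q(x + s v)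
  set f : Fin 4 → Polynomial ℂ := fun i => Polynomial.C (x i) + Polynomial.C (v i) * Polynomial.X
    with hf
  set P : Polynomial ℂ := MvPolynomial.aeval f p with hP
  set Q : Polynomial ℂ := MvPolynomial.aeval f q with hQ
  have heval : ∀ (r : MvPolynomial (Fin 4) ℂ) (s : ℂ),
      (MvPolynomial.aeval f r).eval s = eval (x + s • v) r := by
    intro r s
    have hcomp : (Polynomial.evalRingHom s).comp
        ((MvPolynomial.aeval f : MvPolynomial (Fin 4) ℂ →ₐ[ℂ] Polynomial ℂ) :
          MvPolynomial (Fin 4) ℂ →+* Polynomial ℂ)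
        = (eval (x + s • v) : MvPolynomial (Fin 4) ℂ →+* ℂ) := by
      apply MvPolynomial.ringHom_ext
      · intro a
        simp
      · intro i
        simp [hf, Pi.add_apply, Pi.smul_apply, smul_eq_mul]
        ring
    exact RingHom.congr_fun hcomp r
  -- the functional equation as a valuewise identity
  have key : ∀ s : ℂ, P.eval (s + 1) * Q.eval s = P.eval s * Q.eval (s + 1) := by
    intro s
    have hm : (1 + M).mulVec (x + s • v) = x + (s + 1) • v := by
      rw [Matrix.add_mulVec, Matrix.one_mulVec, Matrix.mulVec_add, Matrix.mulVec_smul, hMv]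
      module
    have := hinv (x + s • v)
    rw [hm] at this
    rw [heval, heval, heval, heval]
    exact this
  -- the functional equation as a polynomial identity
  have keyP : P.comp (Polynomial.X + 1) * Q = P * Q.comp (Polynomial.X + 1) := by
    apply Polynomial.funext
    intro s
    simp only [Polynomial.eval_mul, Polynomial.eval_comp, Polynomial.eval_add,
      Polynomial.eval_X, Polynomial.eval_one]
    exact key s
  -- the main identity at the level of values: P(t) Q(0) = P(0) Q(t)
  have main : P.eval t * Q.eval 0 = P.eval 0 * Q.eval t := by
    by_cases hP0 : P = 0
    · simp [hP0]
    by_cases hQ0 : Q = 0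
    · simp [hQ0]
    -- iterate the functional equation
    have iter : ∀ n : ℕ, P.comp (Polynomial.X + Polynomial.C (n : ℂ)) * Q
        = P * Q.comp (Polynomial.X + Polynomial.C (n : ℂ)) := by
      intro n
      induction n with
      | zero => simp
      | succ n ih =>
        have hcomp := congrArg
          (fun r => r.comp (Polynomial.X + Polynomial.C (n : ℂ))) keyP
        simp only [Polynomial.mul_comp, Polynomial.comp_assoc, Polynomial.add_comp,
          Polynomial.X_comp, Polynomial.one_comp] at hcomp
        -- hcomp : P.comp (X + C n + 1) * Q.comp (X + C n)
        --       = P.comp (X + C n) * Q.comp (X + C n + 1)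
        have hcast : Polynomial.X + Polynomial.C (n : ℂ) + 1
            = Polynomial.X + Polynomial.C ((n + 1 : ℕ) : ℂ) := by
          rw [Nat.cast_add, Nat.cast_one, Polynomial.C_add, Polynomial.C_1, add_assoc]
        rw [hcast] at hcomp
        have hne : P.comp (Polynomial.X + Polynomial.C (n : ℂ))
            * Q.comp (Polynomial.X + Polynomial.C (n : ℂ)) ≠ 0 :=
          mul_ne_zero (comp_X_add_C_ne_zero hP0 _) (comp_X_add_C_ne_zero hQ0 _)
        apply mul_left_cancel₀ hne
        calc P.comp (Polynomial.X + Polynomial.C (n : ℂ))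
              * Q.comp (Polynomial.X + Polynomial.C (n : ℂ))
              * (P.comp (Polynomial.X + Polynomial.C ((n + 1 : ℕ) : ℂ)) * Q)
            = (P.comp (Polynomial.X + Polynomial.C ((n + 1 : ℕ) : ℂ))
                * Q.comp (Polynomial.X + Polynomial.C (n : ℂ)))
                * (P.comp (Polynomial.X + Polynomial.C (n : ℂ)) * Q) := by ring
          _ = (P.comp (Polynomial.X + Polynomial.C (n : ℂ))
                * Q.comp (Polynomial.X + Polynomial.C ((n + 1 : ℕ) : ℂ)))
                * (P * Q.comp (Polynomial.X + Polynomial.C (n : ℂ))) := by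
                rw [hcomp, ih]
          _ = P.comp (Polynomial.X + Polynomial.C (n : ℂ))
              * Q.comp (Polynomial.X + Polynomial.C (n : ℂ))
              * (P * Q.comp (Polynomial.X + Polynomial.C ((n + 1 : ℕ) : ℂ))) := by ring
    -- evaluate at 0 : P(n) Q(0) = P(0) Q(n) for all n : ℕ
    have hval : ∀ n : ℕ, P.eval (n : ℂ) * Q.eval 0 = P.eval 0 * Q.eval (n : ℂ) := by
      intro n
      have := congrArg (Polynomial.eval (0 : ℂ)) (iter n)
      simpa [Polynomial.eval_comp] using this
    -- hence the polynomial P · Q(0) − P(0) · Q has infinitely many roots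
    have hGzero : P * Polynomial.C (Q.eval 0) - Polynomial.C (P.eval 0) * Q = 0 := by
      apply Polynomial.eq_zero_of_infinite_isRoot
      apply Set.Infinite.mono (s := Set.range ((↑·) : ℕ → ℂ))
      · rintro _ ⟨n, rfl⟩
        simp only [Set.mem_setOf_eq, Polynomial.IsRoot, Polynomial.eval_sub,
          Polynomial.eval_mul, Polynomial.eval_C]
        rw [hval n]
        ring
      · exact Set.infinite_range_of_injective Nat.cast_injective
    have := congrArg (Polynomial.eval t) hGzero
    simp only [Polynomial.eval_sub, Polynomial.eval_mul, Polynomial.eval_C,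
      Polynomial.eval_zero, sub_eq_zero] at this
    exact this
  rw [heval p t, heval q 0, heval p 0, heval q t] at main
  simpa using main
end
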